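/- arXiv:math/9902115 — 3 statements merged into one kernel-verified Lean document; each statement's English description precedes it below -/
import Mathlib

section
/- Let m, c, r₀ > 0, let ℓ(r,x) = −m c² (√(1−x) + (r/r₀)² (1 + x/2)) and E(r,x) = 2x·ℓ_x(r,x) − ℓ(r,x). Then for all r ≥ 0 and 0 ≤ x < 1 one has ∂²E/∂x²(r,x) = (3 m c²/4)(1−x)^{−5/2} > 0; consequently, at every point (r,x) with r > 0, 0 ≤ x < 1, ∂E/∂x(r,x) = 0 and ℓ_x(r,x) ≠ 0, the partial derivative with respect to x of the product ℓ_x·E_x (the Hessian determinant of the Legendre map up to the positive factor 4/c⁴) is nonzero. -/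
lemma pg_sqrt_deriv (x : ℝ) (hx : x < 1) :
    HasDerivAt (fun y : ℝ => Real.sqrt (1 - y)) (-(2 * Real.sqrt (1 - x))⁻¹) x := by
  have h1 : HasDerivAt (fun z : ℝ => 1 - z) (-1) x := by
    simpa using (hasDerivAt_id x).const_sub 1
  have h2 := (Real.hasDerivAt_sqrt (by linarith : (1:ℝ) - x ≠ 0)).comp x h1
  refine h2.congr_deriv ?_
  field_simp

lemma pg_alg1 (A u t : ℝ) (ht : 0 < t) (h : t ^ 2 = u) :
    A / (4 * (u * t)) = A / 2 * ((2 * t)⁻¹ / t ^ 2) := by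
  subst h
  field_simp
  ring_nf

lemma pg_alg2 (A k y t : ℝ) (ht : 0 < t) (hy : t ^ 2 = 1 - y) :
    A / 2 * ((1 - y) * t)⁻¹ - A * k / 2 =
      2 * (A / 2 * t⁻¹ - A * k / 2) + 2 * y * (A / 2 * ((2 * t)⁻¹ / t ^ 2))
        - (A / 2 * t⁻¹ - A * k / 2) := by
  have h : y = 1 - t ^ 2 := by linarith
  subst h
  field_simp
  ring

lemma pg_alg3 (A x t : ℝ) (ht : 0 < t) (hx : t ^ 2 = 1 - x) :
    3 * A / (4 * ((1 - x) ^ 2 * t)) =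
      A / 2 * (-(-1 * t + (1 - x) * -(2 * t)⁻¹) / ((1 - x) * t) ^ 2) := by
  have h : x = 1 - t ^ 2 := by linarith
  subst h
  field_simp
  ring

lemma pg_master (m c r₀ : ℝ) (hm : 0 < m) (hc : 0 < c) (hr₀ : 0 < r₀)
    (ℓ : ℝ → ℝ → ℝ)
    (hℓ : ∀ r x : ℝ,
      ℓ r x = -(m * c ^ 2) * (Real.sqrt (1 - x) + (r / r₀) ^ 2 * (1 + x / 2)))
    (E : ℝ → ℝ → ℝ)
    (hE : ∀ r x : ℝ, E r x = 2 * x * deriv (ℓ r) x - ℓ r x)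
    (r x : ℝ) (hx : x < 1) :
    HasDerivAt (deriv (ℓ r))
      (m * c ^ 2 / (4 * ((1 - x) * Real.sqrt (1 - x)))) x ∧
    HasDerivAt (deriv (E r))
      (3 * (m * c ^ 2) / (4 * ((1 - x) ^ 2 * Real.sqrt (1 - x)))) x := by
  set A := m * c ^ 2 with hA
  set k := (r / r₀) ^ 2 with hk
  set g : ℝ → ℝ := fun y => A / 2 * (Real.sqrt (1 - y))⁻¹ - A * k / 2 with hg
  have hld : ∀ y : ℝ, y < 1 → HasDerivAt (ℓ r) (g y) y := by
    intro y hy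
    have hfun : ℓ r = fun z => -A * (Real.sqrt (1 - z) + k * (1 + z / 2)) :=
      funext (hℓ r)
    rw [hfun]
    have hsy : 0 < Real.sqrt (1 - y) := Real.sqrt_pos.2 (by linarith)
    have h3 : HasDerivAt (fun z : ℝ => k * (1 + z / 2)) (k * (1 / 2)) y :=
      HasDerivAt.const_mul k (by simpa using ((hasDerivAt_id y).div_const 2).const_add 1)
    have h4 := ((pg_sqrt_deriv y hy).add h3).const_mul (-A)
    refine h4.congr_deriv ?_
    rw [hg]
    field_simp
    ring
  have hx1 : (0:ℝ) < 1 - x := by linarith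
  have hspos : 0 < Real.sqrt (1 - x) := Real.sqrt_pos.2 hx1
  have hs2 : Real.sqrt (1 - x) ^ 2 = 1 - x := Real.sq_sqrt hx1.le
  have hmem : {y : ℝ | y < 1} ∈ nhds x := isOpen_Iio.mem_nhds hx
  have hgd : ∀ y : ℝ, y < 1 →
      HasDerivAt g (A / 2 * ((2 * Real.sqrt (1 - y))⁻¹ / Real.sqrt (1 - y) ^ 2)) y := by
    intro y hy
    have hsy : 0 < Real.sqrt (1 - y) := Real.sqrt_pos.2 (by linarith)
    have h5 := (((pg_sqrt_deriv y hy).inv hsy.ne').const_mul (A / 2)).sub_const (A * k / 2)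
    refine h5.congr_deriv ?_
    field_simp
  have heq : deriv (ℓ r) =ᶠ[nhds x] g :=
    Filter.eventually_of_mem hmem fun y hy => (hld y hy).deriv
  have hDl : HasDerivAt (deriv (ℓ r)) (A / (4 * ((1 - x) * Real.sqrt (1 - x)))) x := by
    have h := (hgd x hx).congr_of_eventuallyEq heq
    rw [← pg_alg1 A (1 - x) (Real.sqrt (1 - x)) hspos hs2] at h
    exact h
  refine ⟨hDl, ?_⟩
  set Ex : ℝ → ℝ := fun y => A / 2 * ((1 - y) * Real.sqrt (1 - y))⁻¹ - A * k / 2 with hEx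
  have hEd : ∀ y : ℝ, y < 1 → HasDerivAt (E r) (Ex y) y := by
    intro y hy
    have hsy : 0 < Real.sqrt (1 - y) := Real.sqrt_pos.2 (by linarith)
    have hsy2 : Real.sqrt (1 - y) ^ 2 = 1 - y := Real.sq_sqrt (by linarith)
    have hmemy : {z : ℝ | z < 1} ∈ nhds y := isOpen_Iio.mem_nhds hy
    have heqy : E r =ᶠ[nhds y] fun z => 2 * z * g z - ℓ r z := by
      refine Filter.eventually_of_mem hmemy fun z hz => ?_
      rw [hE r z, (hld z hz).deriv]
    have hF : HasDerivAt (fun z => 2 * z * g z - ℓ r z)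
        (2 * g y + 2 * y * (A / 2 * ((2 * Real.sqrt (1 - y))⁻¹ / Real.sqrt (1 - y) ^ 2))
          - g y) y := by
      have h6 := (((hasDerivAt_id y).const_mul 2).mul (hgd y hy)).sub (hld y hy)
      refine h6.congr_deriv ?_
      simp only [id_eq, mul_one]
    have h := hF.congr_of_eventuallyEq heqy
    have h' : HasDerivAt (E r)
        (2 * (A / 2 * (Real.sqrt (1 - y))⁻¹ - A * k / 2)
          + 2 * y * (A / 2 * ((2 * Real.sqrt (1 - y))⁻¹ / Real.sqrt (1 - y) ^ 2))
          - (A / 2 * (Real.sqrt (1 - y))⁻¹ - A * k / 2)) y := h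
    show HasDerivAt (E r) (A / 2 * ((1 - y) * Real.sqrt (1 - y))⁻¹ - A * k / 2) y
    rw [pg_alg2 A k y (Real.sqrt (1 - y)) hsy hsy2]
    exact h'
  have heqE : deriv (E r) =ᶠ[nhds x] Ex :=
    Filter.eventually_of_mem hmem fun y hy => (hEd y hy).deriv
  have hu : HasDerivAt (fun y : ℝ => (1 - y) * Real.sqrt (1 - y))
      (-1 * Real.sqrt (1 - x) + (1 - x) * -(2 * Real.sqrt (1 - x))⁻¹) x := by
    have h1 : HasDerivAt (fun z : ℝ => 1 - z) (-1) x := by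
      simpa using (hasDerivAt_id x).const_sub 1
    exact h1.mul (pg_sqrt_deriv x hx)
  have hux : (1 - x) * Real.sqrt (1 - x) ≠ 0 := by positivity
  have h9 : HasDerivAt Ex
      (A / 2 * (-(-1 * Real.sqrt (1 - x) + (1 - x) * -(2 * Real.sqrt (1 - x))⁻¹)
        / ((1 - x) * Real.sqrt (1 - x)) ^ 2)) x :=
    ((hu.inv hux).const_mul (A / 2)).sub_const (A * k / 2)
  have h := h9.congr_of_eventuallyEq heqE
  rw [pg_alg3 A x (Real.sqrt (1 - x)) hspos hs2]
  exact h

/-- For the post-Galilean oscillator, `∂²E/∂x² = (3mc²/4)(1−x)^{−5/2} > 0`; hence at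
every point with `E_x = 0` and `ℓ_x ≠ 0` the `x`-derivative of the product `ℓ_x·E_x`
is nonzero. -/
theorem stmt_8 (m c r₀ : ℝ) (hm : 0 < m) (hc : 0 < c) (hr₀ : 0 < r₀)
    (ℓ : ℝ → ℝ → ℝ)
    (hℓ : ∀ r x : ℝ,
      ℓ r x = -(m * c ^ 2) * (Real.sqrt (1 - x) + (r / r₀) ^ 2 * (1 + x / 2)))
    (E : ℝ → ℝ → ℝ)
    (hE : ∀ r x : ℝ, E r x = 2 * x * deriv (ℓ r) x - ℓ r x) :
    (∀ r x : ℝ, 0 ≤ r → 0 ≤ x → x < 1 →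
      deriv (deriv (E r)) x = 3 * m * c ^ 2 / 4 * (1 - x) ^ (-(5 / 2 : ℝ)) ∧
      0 < deriv (deriv (E r)) x) ∧
    ∀ r x : ℝ, 0 < r → 0 ≤ x → x < 1 →
      deriv (E r) x = 0 → deriv (ℓ r) x ≠ 0 →
      deriv (fun y => deriv (ℓ r) y * deriv (E r) y) x ≠ 0 := by
  constructor
  · intro r x hr hx0 hx1
    obtain ⟨h1, h2⟩ := pg_master m c r₀ hm hc hr₀ ℓ hℓ E hE r x hx1
    have hxp : (0:ℝ) < 1 - x := by linarith
    have hs : 0 < Real.sqrt (1 - x) := Real.sqrt_pos.2 hxp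
    have hd2 : deriv (deriv (E r)) x
        = 3 * (m * c ^ 2) / (4 * ((1 - x) ^ 2 * Real.sqrt (1 - x))) := h2.deriv
    have hpos : 0 < 3 * (m * c ^ 2) / (4 * ((1 - x) ^ 2 * Real.sqrt (1 - x))) := by
      apply div_pos (by positivity)
      have := mul_pos (pow_pos hxp 2) hs
      linarith
    have hrpow : (1 - x) ^ (-(5 / 2 : ℝ)) = ((1 - x) ^ 2 * Real.sqrt (1 - x))⁻¹ := by
      rw [Real.rpow_neg hxp.le, show (5 / 2 : ℝ) = 2 + 1 / 2 by norm_num,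
        Real.rpow_add hxp, Real.sqrt_eq_rpow,
        show ((2:ℝ)) = ((2:ℕ):ℝ) by norm_num, Real.rpow_natCast]
    refine ⟨?_, hd2 ▸ hpos⟩
    rw [hd2, hrpow]
    field_simp
  · intro r x hr hx0 hx1 hEx0 hlx
    obtain ⟨h1, h2⟩ := pg_master m c r₀ hm hc hr₀ ℓ hℓ E hE r x hx1
    have hxp : (0:ℝ) < 1 - x := by linarith
    have hs : 0 < Real.sqrt (1 - x) := Real.sqrt_pos.2 hxp
    have hp : HasDerivAt (fun y => deriv (ℓ r) y * deriv (E r) y) _ x := h1.mul h2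
    rw [hp.deriv, hEx0]
    have hpos : 0 < 3 * (m * c ^ 2) / (4 * ((1 - x) ^ 2 * Real.sqrt (1 - x))) := by
      apply div_pos (by positivity)
      have := mul_pos (pow_pos hxp 2) hs
      linarith
    simp only [mul_zero, zero_add]
    exact mul_ne_zero hlx hpos.ne'
end

section
/- Let c > 0, let ℓ : ℝ × ℝ → ℝ be twice continuously differentiable, fix r ≥ 0 and v = (v₁,v₂) ∈ ℝ² with v ≠ 0, and set x = (v₁²+v₂²)/c². Let A be the 2×2 matrix with entries Aᵢⱼ = (2/c²) ℓ_x(r,x) δᵢⱼ + (4/c⁴) ℓ_xx(r,x) vᵢ vⱼ (the Hessian of w ↦ ℓ(r, ‖w‖²/c²) at v). If ℓ_x(r,x) + 2x·ℓ_xx(r,x) = 0 and ℓ_x(r,x) ≠ 0, then the kernel of A (as a linear map ℝ² → ℝ²) is exactly the line ℝ·v spanned by v. -/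
/-- On `S₁ ∖ S₂` (i.e. `ℓ_x + 2x ℓ_xx = 0`, `ℓ_x ≠ 0`), the kernel of the Hessian
matrix `A` of the Legendre map is exactly the line spanned by the velocity `v`. -/
theorem stmt_9 (c : ℝ) (hc : 0 < c) (ℓ : ℝ → ℝ → ℝ)
    (hℓ : ContDiff ℝ 2 (fun p : ℝ × ℝ => ℓ p.1 p.2))
    (r : ℝ) (hr : 0 ≤ r) (v : Fin 2 → ℝ) (hv : v ≠ 0)
    (x : ℝ) (hx : x = (v 0 ^ 2 + v 1 ^ 2) / c ^ 2)
    (A : Matrix (Fin 2) (Fin 2) ℝ)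
    (hA : ∀ i j : Fin 2,
      A i j = (2 / c ^ 2) * deriv (ℓ r) x * (if i = j then 1 else 0)
        + (4 / c ^ 4) * deriv (deriv (ℓ r)) x * v i * v j)
    (h1 : deriv (ℓ r) x + 2 * x * deriv (deriv (ℓ r)) x = 0)
    (h2 : deriv (ℓ r) x ≠ 0) :
    ∀ w : Fin 2 → ℝ, A.mulVec w = 0 ↔ ∃ t : ℝ, w = t • v := by
  intro w
  set a := deriv (ℓ r) x with ha
  set b := deriv (deriv (ℓ r)) x with hb
  have hc2 : (c:ℝ)^2 ≠ 0 := by positivity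
  have hc4 : (c:ℝ)^4 ≠ 0 := by positivity
  have h6 : (2 * c^6 : ℝ) ≠ 0 := by positivity
  have hx' : x * c^2 = v 0 ^ 2 + v 1 ^ 2 := by rw [hx]; field_simp
  constructor
  · intro hw
    have h0 := congrFun hw 0
    have h1' := congrFun hw 1
    simp [Matrix.mulVec, dotProduct, Fin.sum_univ_two, hA] at h0 h1'
    field_simp at h0 h1'
    have H0 : a * c^2 * w 0 + 2 * b * v 0 * (v 0 * w 0 + v 1 * w 1) = 0 := by
      have h : (2 * c^6) * (a * c^2 * w 0 + 2 * b * v 0 * (v 0 * w 0 + v 1 * w 1)) = 0 := by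
        linear_combination c^6 * h0
      exact (mul_eq_zero.mp h).resolve_left h6
    have H1 : a * c^2 * w 1 + 2 * b * v 1 * (v 0 * w 0 + v 1 * w 1) = 0 := by
      have h : (2 * c^6) * (a * c^2 * w 1 + 2 * b * v 1 * (v 0 * w 0 + v 1 * w 1)) = 0 := by
        linear_combination c^6 * h1'
      exact (mul_eq_zero.mp h).resolve_left h6
    refine ⟨-(2 * b * (v 0 * w 0 + v 1 * w 1)) / (c^2 * a), ?_⟩
    funext i
    fin_cases i
    · show w 0 = _ * v 0
      field_simp
      linear_combination H0
    · show w 1 = _ * v 1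
      field_simp
      linear_combination H1
  · rintro ⟨t, rfl⟩
    funext i
    simp only [Matrix.mulVec, dotProduct, Fin.sum_univ_two, hA,
      Pi.smul_apply, smul_eq_mul, Pi.zero_apply]
    fin_cases i
    · simp only [Fin.zero_eta, Fin.mk_one, Fin.isValue, ↓reduceIte, one_ne_zero, zero_ne_one]
      field_simp
      linear_combination 2*t*(v 0)*c^2*h1 - 4*b*t*(v 0)*hx'
    · simp only [Fin.zero_eta, Fin.mk_one, Fin.isValue, ↓reduceIte, one_ne_zero, zero_ne_one]
      field_simp
      linear_combination 2*t*(v 1)*c^2*h1 - 4*b*t*(v 1)*hx'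
end

section
/- Let p̄ = (p̄₁, p̄₂, p̄₃) ∈ ℝ³ with p̄₁² + p̄₂² > 0, let n̄ > 0, and suppose p̄₃² + (n̄² − 1)·(p̄₁² + p̄₂² + p̄₃²) ≥ 0. Let p̃₃ ≥ 0 satisfy p̃₃² = p̄₃² + (n̄² − 1)·(p̄₁² + p̄₂² + p̄₃²), and set p̃ = (p̄₁, p̄₂, p̃₃). Then ‖p̃‖ = n̄·‖p̄‖ and √(1 − p̄₃²/‖p̄‖²) = n̄·√(1 − p̃₃²/‖p̃‖²); that is, sin φ / sin ψ = n̄, where φ and ψ are the angles that p̄ and p̃ form with the q₃-axis (Snellius' law). -/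
/-- Snellius' law: the refracted momentum `p̃ = (p̄₁,p̄₂,p̃₃)` with
`p̃₃² = p̄₃² + (n̄²−1)‖p̄‖²` satisfies `‖p̃‖ = n̄‖p̄‖` and `sin φ = n̄ sin ψ`. -/
theorem stmt_16 (p1 p2 p3 n pt3 : ℝ) (hp : 0 < p1 ^ 2 + p2 ^ 2) (hn : 0 < n)
    (hge : 0 ≤ p3 ^ 2 + (n ^ 2 - 1) * (p1 ^ 2 + p2 ^ 2 + p3 ^ 2))
    (hpt3 : 0 ≤ pt3)
    (hpt3sq : pt3 ^ 2 = p3 ^ 2 + (n ^ 2 - 1) * (p1 ^ 2 + p2 ^ 2 + p3 ^ 2)) :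
    Real.sqrt (p1 ^ 2 + p2 ^ 2 + pt3 ^ 2) = n * Real.sqrt (p1 ^ 2 + p2 ^ 2 + p3 ^ 2) ∧
    Real.sqrt (1 - p3 ^ 2 / (p1 ^ 2 + p2 ^ 2 + p3 ^ 2)) =
      n * Real.sqrt (1 - pt3 ^ 2 / (p1 ^ 2 + p2 ^ 2 + pt3 ^ 2)) := by
  have hP : 0 < p1 ^ 2 + p2 ^ 2 + p3 ^ 2 := by positivity
  have hPt : p1 ^ 2 + p2 ^ 2 + pt3 ^ 2 = n ^ 2 * (p1 ^ 2 + p2 ^ 2 + p3 ^ 2) := by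
    rw [hpt3sq]; ring
  constructor
  · rw [hPt, Real.sqrt_mul (by positivity), Real.sqrt_sq hn.le]
  · have h1 : 1 - p3 ^ 2 / (p1 ^ 2 + p2 ^ 2 + p3 ^ 2)
        = (p1 ^ 2 + p2 ^ 2) / (p1 ^ 2 + p2 ^ 2 + p3 ^ 2) := by
      field_simp; ring
    have h2 : 1 - pt3 ^ 2 / (p1 ^ 2 + p2 ^ 2 + pt3 ^ 2)
        = (p1 ^ 2 + p2 ^ 2) / (n ^ 2 * (p1 ^ 2 + p2 ^ 2 + p3 ^ 2)) := by
      rw [hPt]; field_simp; ring_nf; rw [hpt3sq]; ring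
    rw [h1, h2, Real.sqrt_div' _ (by positivity), Real.sqrt_div' _ (by positivity),
      Real.sqrt_mul (by positivity), Real.sqrt_sq hn.le]
    field_simp
end
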